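/- Let m > 0, ξ > 0, γ̄ > 0 be real numbers and set β = Γ(m + 1/ξ)/Γ(m). Then ∫_0^∞ (log γ) · (ξ/Γ(m)) · (β/γ̄)^{ξm} · γ^{ξm − 1} · exp(−((β/γ̄)·γ)^ξ) dγ = log(γ̄) − log(β) + (1/ξ) · Γ′(m)/Γ(m), where Γ′ is the derivative of the real Gamma function. -/

import Mathlib

open MeasureTheory Set Filter
open scoped Topology

/-- For `0 < s.re`, the complex Gamma integral has the log-weighted integral as derivative,
and that integral converges. -/
lemma aux_mellin_conv_and_deriv {s : ℂ} (hs : 0 < s.re) :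
    MellinConvergent (fun t => Real.log t • ((Real.exp (-t) : ℝ) : ℂ)) s ∧
      HasDerivAt Complex.GammaIntegral
        (∫ t : ℝ in Ioi 0, (t : ℂ) ^ (s - 1) * (Real.log t * Real.exp (-t))) s := by
  rw [Complex.GammaIntegral_eq_mellin]
  have H := mellin_hasDerivAt_of_isBigO_rpow (E := ℂ) (a := s.re + 1) (b := 0)
    (f := fun x : ℝ => ((Real.exp (-x) : ℝ) : ℂ)) ?_ ?_ (lt_add_one _) ?_ hs
  · refine ⟨H.1, H.2.congr_deriv ?_⟩
    unfold mellin
    refine setIntegral_congr_fun measurableSet_Ioi (fun t _ => ?_)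
    simp only [smul_eq_mul, Complex.real_smul]
  · refine (Continuous.continuousOn ?_).locallyIntegrableOn measurableSet_Ioi
    exact Complex.continuous_ofReal.comp (Real.continuous_exp.comp continuous_neg)
  · rw [← Asymptotics.isBigO_norm_left]
    simp_rw [Complex.norm_real,
      Asymptotics.isBigO_norm_left]
    simpa only [neg_one_mul] using
      (isLittleO_exp_neg_mul_rpow_atTop zero_lt_one _).isBigO
  · simp_rw [neg_zero, Real.rpow_zero]
    refine Asymptotics.isBigO_const_of_tendsto (?_ : Tendsto _ _ (𝓝 (1 : ℂ))) one_ne_zero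
    rw [(by simp : (1 : ℂ) = Real.exp (-0))]
    exact (Complex.continuous_ofReal.comp
      (Real.continuous_exp.comp continuous_neg)).continuousWithinAt

lemma aux_real_log_gamma {m : ℝ} (hm : 0 < m) :
    IntegrableOn (fun t : ℝ => Real.log t * t ^ (m - 1) * Real.exp (-t)) (Ioi 0) ∧
    HasDerivAt Real.Gamma
      (∫ t in Ioi (0:ℝ), Real.log t * t ^ (m - 1) * Real.exp (-t)) m := by
  have hs : 0 < (m : ℂ).re := by simpa using hm
  obtain ⟨hconv, hderiv⟩ := aux_mellin_conv_and_deriv hs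
  have key : ∀ t ∈ Ioi (0:ℝ),
      ((t : ℂ) ^ ((m : ℂ) - 1) * (Real.log t * Real.exp (-t)))
        = ((Real.log t * t ^ (m - 1) * Real.exp (-t) : ℝ) : ℂ) := by
    intro t ht
    rw [show ((m : ℂ) - 1) = ((m - 1 : ℝ) : ℂ) by push_cast; ring,
      ← Complex.ofReal_cpow (le_of_lt ht)]
    push_cast
    ring
  have h1 : IntegrableOn
      (fun t : ℝ => (t : ℂ) ^ ((m : ℂ) - 1) * (Real.log t * Real.exp (-t))) (Ioi 0) := by
    refine IntegrableOn.congr_fun hconv (fun t ht => ?_) measurableSet_Ioi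
    simp [Complex.real_smul, smul_eq_mul]
  have hint : IntegrableOn
      (fun t : ℝ => Real.log t * t ^ (m - 1) * Real.exp (-t)) (Ioi 0) := by
    have h2 := (h1.congr_fun key measurableSet_Ioi).re
    refine IntegrableOn.congr_fun h2 (fun t ht => ?_) measurableSet_Ioi
    exact RCLike.ofReal_re _
  have hDre : (∫ t : ℝ in Ioi 0, (t : ℂ) ^ ((m : ℂ) - 1) * (Real.log t * Real.exp (-t))).re
      = ∫ t in Ioi (0:ℝ), Real.log t * t ^ (m - 1) * Real.exp (-t) := by
    rw [← RCLike.re_to_complex, ← integral_re h1]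
    refine setIntegral_congr_fun measurableSet_Ioi (fun t ht => ?_)
    rw [key t ht]
    exact RCLike.ofReal_re _
  have hD := hderiv.real_of_complex
  rw [hDre] at hD
  refine ⟨hint, hD.congr_of_eventuallyEq ?_⟩
  filter_upwards [eventually_gt_nhds hm] with x hx
  rw [Real.Gamma, Complex.Gamma_eq_integral (by simpa using hx)]

/-- Exact identity behind the paper's high-SNR ergodic capacity for generalized
Nakagami-m (generalized gamma) fading: with `β = Γ(m+1/ξ)/Γ(m)`,
`∫_0^∞ (log γ) p(γ) dγ = log γ̄ - log β + (1/ξ) Γ′(m)/Γ(m)`. -/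
theorem generalized_gamma_log_moment (m ξ γbar : ℝ) (hm : 0 < m) (hξ : 0 < ξ)
    (hγbar : 0 < γbar) (β : ℝ) (hβ : β = Real.Gamma (m + 1 / ξ) / Real.Gamma m) :
    ∫ γ in Set.Ioi (0:ℝ),
        Real.log γ * ((ξ / Real.Gamma m) * (β / γbar) ^ (ξ * m) * γ ^ (ξ * m - 1)
          * Real.exp (-(((β / γbar) * γ) ^ ξ)))
      = Real.log γbar - Real.log β
          + (1 / ξ) * (deriv Real.Gamma m / Real.Gamma m) := by
  have hΓm : 0 < Real.Gamma m := Real.Gamma_pos_of_pos hm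
  have hβpos : 0 < β := by
    rw [hβ]
    exact div_pos (Real.Gamma_pos_of_pos (by positivity)) hΓm
  set c : ℝ := β / γbar with hc
  have hcpos : 0 < c := div_pos hβpos hγbar
  set g : ℝ → ℝ := fun u =>
    (Real.log u - Real.log c) * (ξ / Real.Gamma m) * u ^ (ξ * m - 1)
      * Real.exp (-(u ^ ξ)) * c with hg
  set G : ℝ → ℝ := fun t =>
    (1 / ξ * Real.log t - Real.log c) * (1 / Real.Gamma m) * t ^ (m - 1)
      * Real.exp (-t) with hG
  have step1 : ∫ γ in Set.Ioi (0:ℝ),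
      Real.log γ * ((ξ / Real.Gamma m) * c ^ (ξ * m) * γ ^ (ξ * m - 1)
        * Real.exp (-((c * γ) ^ ξ))) = c⁻¹ * ∫ u in Ioi (0:ℝ), g u := by
    have h := integral_comp_mul_left_Ioi g 0 hcpos
    rw [mul_zero, smul_eq_mul] at h
    rw [← h]
    refine setIntegral_congr_fun measurableSet_Ioi (fun γ hγ => ?_)
    have hγ0 : (0:ℝ) < γ := hγ
    simp only [hg]
    have hcpow : c ^ (ξ * m) = c ^ (ξ * m - 1) * c := by
      rw [← Real.rpow_add_one hcpos.ne']; congr 1; ring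
    rw [Real.log_mul hcpos.ne' hγ0.ne']
    simp only [Real.mul_rpow hcpos.le hγ0.le]
    rw [hcpow]
    ring
  have step2 : ∫ u in Ioi (0:ℝ), g u = c * ∫ t in Ioi (0:ℝ), G t := by
    have h := integral_comp_rpow_Ioi_of_pos (g := G) hξ
    rw [← h, ← integral_const_mul]
    refine setIntegral_congr_fun measurableSet_Ioi (fun u hu => ?_)
    have hu0 : (0:ℝ) < u := hu
    simp only [hg, hG, smul_eq_mul]
    rw [Real.log_rpow hu0, ← Real.rpow_mul hu0.le,
      show 1 / ξ * (ξ * Real.log u) = Real.log u by field_simp]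
    have hexp : u ^ (ξ * (m - 1)) * u ^ (ξ - 1) = u ^ (ξ * m - 1) := by
      rw [← Real.rpow_add hu0]; ring_nf
    rw [← hexp]
    ring
  obtain ⟨hint, hder⟩ := aux_real_log_gamma hm
  have hgamma_int : IntegrableOn (fun t : ℝ => Real.exp (-t) * t ^ (m - 1)) (Ioi 0) :=
    Real.GammaIntegral_convergent hm
  have step3 : ∫ t in Ioi (0:ℝ), G t
      = (1 / ξ) * (1 / Real.Gamma m)
          * (∫ t in Ioi (0:ℝ), Real.log t * t ^ (m - 1) * Real.exp (-t))
        - Real.log c * (1 / Real.Gamma m)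
          * (∫ t in Ioi (0:ℝ), Real.exp (-t) * t ^ (m - 1)) := by
    rw [← integral_const_mul, ← integral_const_mul, ← integral_sub
      (hint.const_mul _) (hgamma_int.const_mul _)]
    refine setIntegral_congr_fun measurableSet_Ioi (fun t ht => ?_)
    simp only [hG]
    ring
  have hGammaInt : ∫ t in Ioi (0:ℝ), Real.exp (-t) * t ^ (m - 1) = Real.Gamma m :=
    (Real.Gamma_eq_integral hm).symm
  have hderEq : ∫ t in Ioi (0:ℝ), Real.log t * t ^ (m - 1) * Real.exp (-t)
      = deriv Real.Gamma m := hder.deriv.symm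
  have hlogc : Real.log c = Real.log β - Real.log γbar :=
    Real.log_div hβpos.ne' hγbar.ne'
  calc ∫ γ in Set.Ioi (0:ℝ),
        Real.log γ * ((ξ / Real.Gamma m) * (β / γbar) ^ (ξ * m) * γ ^ (ξ * m - 1)
          * Real.exp (-(((β / γbar) * γ) ^ ξ)))
      = c⁻¹ * (c * ∫ t in Ioi (0:ℝ), G t) := by rw [← step2, ← step1]
    _ = ∫ t in Ioi (0:ℝ), G t := by field_simp
    _ = Real.log γbar - Real.log β
          + (1 / ξ) * (deriv Real.Gamma m / Real.Gamma m) := by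
        rw [step3, hGammaInt, hderEq, hlogc]
        field_simp
        ring
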